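/- If a continuously differentiable covector field A : ℝ⁴ → ℝ⁴ satisfies the invariance conditions L_ξA = 0 for the six vector fields ξ = e₁, ξ = e₂, ξ = e₃, ξ = e₄, ξ = e₁₃ = (x³, 0, −x¹, 0) and ξ = e₂₄ = (0, x⁴, 0, x²), then A ≡ 0. In other words, the class P₍₆,₂₎ of potentials invariant under all translations, the rotation e₁₃ and the pseudo-rotation e₂₄ is empty (contains only the zero field). -/
import Mathlib


open Real

/-- Partial derivative of a scalar function on ℝ⁴ in the j-th coordinate direction. -/
noncomputable def pd (j : Fin 4) (f : (Fin 4 → ℝ) → ℝ) (x : Fin 4 → ℝ) : ℝ :=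
  fderiv ℝ f x (Pi.single j 1)

/-- The i-th component of the Lie derivative of the covector field A along
the vector field ξ at the point x:  Σ_j ξ^j ∂_j A_i + Σ_j A_j ∂_i ξ^j. -/
noncomputable def lieCov (ξ A : (Fin 4 → ℝ) → Fin 4 → ℝ) (x : Fin 4 → ℝ) (i : Fin 4) : ℝ :=
  (∑ j : Fin 4, ξ x j * pd j (fun y => A y i) x)
    + ∑ j : Fin 4, A x j * pd i (fun y => ξ y j) x

/-- Invariance condition L_ξ A = 0 on all of ℝ⁴. -/
def PInvariant (ξ A : (Fin 4 → ℝ) → Fin 4 → ℝ) : Prop :=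
  ∀ x i, lieCov ξ A x i = 0

/-- Invariance condition L_ξ A = 0 on a set M. -/
def PInvariantOn (ξ A : (Fin 4 → ℝ) → Fin 4 → ℝ) (M : Set (Fin 4 → ℝ)) : Prop :=
  ∀ x ∈ M, ∀ i, lieCov ξ A x i = 0

def e1 : (Fin 4 → ℝ) → Fin 4 → ℝ := fun _ => ![1, 0, 0, 0]
def e2 : (Fin 4 → ℝ) → Fin 4 → ℝ := fun _ => ![0, 1, 0, 0]
def e3 : (Fin 4 → ℝ) → Fin 4 → ℝ := fun _ => ![0, 0, 1, 0]
def e4 : (Fin 4 → ℝ) → Fin 4 → ℝ := fun _ => ![0, 0, 0, 1]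
def e12 : (Fin 4 → ℝ) → Fin 4 → ℝ := fun x => ![-x 1, x 0, 0, 0]
def e13 : (Fin 4 → ℝ) → Fin 4 → ℝ := fun x => ![x 2, 0, -x 0, 0]
def e23 : (Fin 4 → ℝ) → Fin 4 → ℝ := fun x => ![0, -x 2, x 1, 0]
def e14 : (Fin 4 → ℝ) → Fin 4 → ℝ := fun x => ![x 3, 0, 0, x 0]
def e24 : (Fin 4 → ℝ) → Fin 4 → ℝ := fun x => ![0, x 3, 0, x 1]
def e34 : (Fin 4 → ℝ) → Fin 4 → ℝ := fun x => ![0, 0, x 3, x 2]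


lemma pd_const' (j : Fin 4) (c : ℝ) (x : Fin 4 → ℝ) : pd j (fun _ => c) x = 0 := by
  simp [pd]

lemma pd_coord' (j k : Fin 4) (x : Fin 4 → ℝ) :
    pd j (fun y : Fin 4 → ℝ => y k) x = (Pi.single j (1:ℝ) : Fin 4 → ℝ) k := by
  have h : fderiv ℝ (fun y : Fin 4 → ℝ => y k) x
      = (ContinuousLinearMap.proj k : (Fin 4 → ℝ) →L[ℝ] ℝ) :=
    (ContinuousLinearMap.proj k : (Fin 4 → ℝ) →L[ℝ] ℝ).fderiv
  simp [pd, h]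

lemma pd_neg_coord' (j k : Fin 4) (x : Fin 4 → ℝ) :
    pd j (fun y : Fin 4 → ℝ => -(y k)) x = -((Pi.single j (1:ℝ) : Fin 4 → ℝ) k) := by
  have h : fderiv ℝ (fun y : Fin 4 → ℝ => -(y k)) x
      = -(ContinuousLinearMap.proj k : (Fin 4 → ℝ) →L[ℝ] ℝ) :=
    (-(ContinuousLinearMap.proj k : (Fin 4 → ℝ) →L[ℝ] ℝ)).fderiv
  simp [pd, h]

/-- Class P_{6,2} is empty: invariance under all translations, the rotation
e₁₃ and the pseudo-rotation e₂₄ forces A ≡ 0. -/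
theorem class_P62_empty (A : (Fin 4 → ℝ) → Fin 4 → ℝ) (hA : ContDiff ℝ 1 A)
    (h1 : PInvariant e1 A) (h2 : PInvariant e2 A)
    (h3 : PInvariant e3 A) (h4 : PInvariant e4 A)
    (h5 : PInvariant e13 A) (h6 : PInvariant e24 A) :
    ∀ x i, A x i = 0 := by
  intro x i
  have hpd : ∀ j k : Fin 4, pd j (fun y => A y k) x = 0 := by
    intro j k
    fin_cases j
    · have := h1 x k; simpa [lieCov, e1, Fin.sum_univ_four, pd_const'] using this
    · have := h2 x k; simpa [lieCov, e2, Fin.sum_univ_four, pd_const'] using this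
    · have := h3 x k; simpa [lieCov, e3, Fin.sum_univ_four, pd_const'] using this
    · have := h4 x k; simpa [lieCov, e4, Fin.sum_univ_four, pd_const'] using this
  have hA0 : A x 0 = 0 := by
    have := h5 x 2
    simpa [lieCov, e13, Fin.sum_univ_four, pd_const', pd_coord', pd_neg_coord', hpd,
      Pi.single_apply] using this
  have hA2 : A x 2 = 0 := by
    have := h5 x 0
    simpa [lieCov, e13, Fin.sum_univ_four, pd_const', pd_coord', pd_neg_coord', hpd,
      Pi.single_apply] using this
  have hA1 : A x 1 = 0 := by
    have := h6 x 3
    simpa [lieCov, e24, Fin.sum_univ_four, pd_const', pd_coord', pd_neg_coord', hpd,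
      Pi.single_apply] using this
  have hA3 : A x 3 = 0 := by
    have := h6 x 1
    simpa [lieCov, e24, Fin.sum_univ_four, pd_const', pd_coord', pd_neg_coord', hpd,
      Pi.single_apply] using this
  fin_cases i <;> assumption
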